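/- Let H be a real inner product space, n ≥ 1, and suppose real coefficients b_0, ..., b_{n-1} ≥ 0 are nonincreasing (b_{j} ≥ b_{j+1} for all j). Then for any u^1, ..., u^n ∈ H, ⟨∑_{k=1}^n b_{n-k} u^k, u^n⟩ = (1/2)∑_{k=1}^{n-1}(b_{n-k-1} - b_{n-k})‖∑_{j=k+1}^n u^j‖² + (1/2) b_{n-1} ‖∑_{j=1}^n u^j‖² + (1/2) b_0 ‖u^n‖² - (1/2)∑_{k=1}^{n-1}(b_{n-k-1} - b_{n-k})‖∑_{j=k+1}^{n-1} u^j‖² - (1/2) b_{n-1} ‖∑_{j=1}^{n-1} u^j‖². -/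

import Mathlib

open RealInnerProductSpace Finset

private lemma tele_aux (b : ℕ → ℝ) (m : ℕ) :
    ∀ p, p ≤ m → ∑ k ∈ Finset.Icc 1 p, (b (m-k) - b (m+1-k)) = b (m-p) - b m := by
  intro p
  induction p with
  | zero => simp
  | succ q ih =>
    intro hq
    rw [Finset.sum_Icc_succ_top (Nat.le_add_left 1 q), ih (Nat.le_of_succ_le hq)]
    have h1 : m + 1 - (q + 1) = m - q := Nat.succ_sub_succ m q
    rw [h1]
    ring

private lemma abel_aux (b v : ℕ → ℝ) (m : ℕ) :
    ∑ k ∈ Finset.Icc 1 m, b (m+1-k) * v k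
      = ∑ k ∈ Finset.Icc 1 m, (b (m-k) - b (m+1-k)) * (∑ j ∈ Finset.Icc (k+1) m, v j)
        + b m * ∑ j ∈ Finset.Icc 1 m, v j := by
  rcases Nat.eq_zero_or_pos m with rfl | hm
  · simp
  have hswap : ∑ k ∈ Finset.Icc 1 m, ∑ j ∈ Finset.Icc (k+1) m,
        (b (m-k) - b (m+1-k)) * v j
      = ∑ j ∈ Finset.Icc 2 m, ∑ k ∈ Finset.Icc 1 (j-1),
        (b (m-k) - b (m+1-k)) * v j := by
    apply Finset.sum_comm'
    intro k j
    simp only [Finset.mem_Icc]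
    omega
  calc ∑ k ∈ Finset.Icc 1 m, b (m+1-k) * v k
      = b (m+1-1) * v 1 + ∑ k ∈ Finset.Icc 2 m, b (m+1-k) * v k := by
        rw [show Finset.Icc 1 m = Finset.Icc 1 1 ∪ Finset.Icc 2 m by
          ext x; simp only [Finset.mem_union, Finset.mem_Icc]; omega,
          Finset.sum_union (by
            simp only [Finset.disjoint_left, Finset.mem_Icc]; omega)]
        simp
    _ = ∑ j ∈ Finset.Icc 2 m, (b (m+1-j) - b m) * v j + b m * ∑ j ∈ Finset.Icc 1 m, v j := by
        rw [Finset.mul_sum,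
          show Finset.Icc 1 m = Finset.Icc 1 1 ∪ Finset.Icc 2 m by
            ext x; simp only [Finset.mem_union, Finset.mem_Icc]; omega,
          Finset.sum_union (by
            simp only [Finset.disjoint_left, Finset.mem_Icc]; omega)]
        simp only [Finset.Icc_self, Finset.sum_singleton]
        have hsplit : ∑ j ∈ Finset.Icc 2 m, (b (m+1-j) - b m) * v j
            = ∑ j ∈ Finset.Icc 2 m, b (m+1-j) * v j
              - ∑ j ∈ Finset.Icc 2 m, b m * v j := by
          rw [← Finset.sum_sub_distrib]
          exact Finset.sum_congr rfl fun j _ => by ring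
        rw [hsplit, show m + 1 - 1 = m from by omega]
        ring
    _ = ∑ k ∈ Finset.Icc 1 m, (b (m-k) - b (m+1-k)) * (∑ j ∈ Finset.Icc (k+1) m, v j)
          + b m * ∑ j ∈ Finset.Icc 1 m, v j := by
        congr 1
        have : ∀ k ∈ Finset.Icc 1 m, (b (m-k) - b (m+1-k)) * (∑ j ∈ Finset.Icc (k+1) m, v j)
            = ∑ j ∈ Finset.Icc (k+1) m, (b (m-k) - b (m+1-k)) * v j := by
          intro k _; rw [Finset.mul_sum]
        rw [Finset.sum_congr rfl this, hswap]
        apply Finset.sum_congr rfl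
        intro j hj
        simp only [Finset.mem_Icc] at hj
        rw [← Finset.sum_mul, tele_aux b m (j-1) (by omega)]
        have : m - (j - 1) = m + 1 - j := by omega
        rw [this]

theorem stmt_9 {H : Type*} [NormedAddCommGroup H] [InnerProductSpace ℝ H]
    (n : ℕ) (hn : 1 ≤ n) (b : ℕ → ℝ) (hb : ∀ j, 0 ≤ b j)
    (hmono : ∀ j, b (j+1) ≤ b j) (u : ℕ → H) :
    ⟪∑ k ∈ Finset.Icc 1 n, b (n-k) • u k, u n⟫ =
      (1/2) * ∑ k ∈ Finset.Icc 1 (n-1),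
          (b (n-k-1) - b (n-k)) * ‖∑ j ∈ Finset.Icc (k+1) n, u j‖^2
      + (1/2) * b (n-1) * ‖∑ j ∈ Finset.Icc 1 n, u j‖^2
      + (1/2) * b 0 * ‖u n‖^2
      - (1/2) * ∑ k ∈ Finset.Icc 1 (n-1),
          (b (n-k-1) - b (n-k)) * ‖∑ j ∈ Finset.Icc (k+1) (n-1), u j‖^2
      - (1/2) * b (n-1) * ‖∑ j ∈ Finset.Icc 1 (n-1), u j‖^2 := by
  obtain ⟨m, rfl⟩ : ∃ m, n = m + 1 := ⟨n - 1, by omega⟩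
  have hm1 : m + 1 - 1 = m := by omega
  rw [hm1]
  set U := u (m+1) with hU
  -- expand LHS
  rw [sum_inner]
  simp only [real_inner_smul_left]
  -- split top of LHS and of the big sums
  have hLHS : ∑ k ∈ Finset.Icc 1 (m+1), b (m+1-k) * ⟪u k, U⟫
      = ∑ k ∈ Finset.Icc 1 m, b (m+1-k) * ⟪u k, U⟫ + b 0 * ‖U‖^2 := by
    rw [Finset.sum_Icc_succ_top (by omega : 1 ≤ m + 1)]
    rw [show m + 1 - (m+1) = 0 by omega, hU, real_inner_self_eq_norm_sq]
  -- norm expansions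
  have hnormA : ∀ k ∈ Finset.Icc 1 m,
      (b (m+1-k-1) - b (m+1-k)) * ‖∑ j ∈ Finset.Icc (k+1) (m+1), u j‖^2
      = (b (m-k) - b (m+1-k)) * (‖∑ j ∈ Finset.Icc (k+1) m, u j‖^2
          + 2 * ⟪∑ j ∈ Finset.Icc (k+1) m, u j, U⟫ + ‖U‖^2) := by
    intro k hk
    simp only [Finset.mem_Icc] at hk
    rw [Finset.sum_Icc_succ_top (by omega : k + 1 ≤ m + 1), norm_add_sq_real,
      show m + 1 - k - 1 = m - k by omega]
  have hnormB : ∀ k ∈ Finset.Icc 1 m,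
      (b (m+1-k-1) - b (m+1-k)) * ‖∑ j ∈ Finset.Icc (k+1) m, u j‖^2
      = (b (m-k) - b (m+1-k)) * ‖∑ j ∈ Finset.Icc (k+1) m, u j‖^2 := by
    intro k hk
    rw [show m + 1 - k - 1 = m - k by omega]
  have hT : ‖∑ j ∈ Finset.Icc 1 (m+1), u j‖^2
      = ‖∑ j ∈ Finset.Icc 1 m, u j‖^2 + 2 * ⟪∑ j ∈ Finset.Icc 1 m, u j, U⟫ + ‖U‖^2 := by
    rw [Finset.sum_Icc_succ_top (by omega : 1 ≤ m + 1), norm_add_sq_real]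
  rw [hLHS, Finset.sum_congr rfl hnormA, Finset.sum_congr rfl hnormB, hT]
  -- distribute sums
  simp only [mul_add, Finset.sum_add_distrib]
  rw [← Finset.sum_mul, tele_aux b m m le_rfl, Nat.sub_self]
  have key := abel_aux b (fun k => ⟪u k, U⟫) m
  have hinner : ∀ k ∈ Finset.Icc 1 m,
      (b (m-k) - b (m+1-k)) * (2 * ⟪∑ j ∈ Finset.Icc (k+1) m, u j, U⟫)
      = 2 * ((b (m-k) - b (m+1-k)) * (∑ j ∈ Finset.Icc (k+1) m, (fun k => ⟪u k, U⟫) j)) := by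
    intro k _
    rw [sum_inner]
    ring
  rw [Finset.sum_congr rfl hinner, ← Finset.mul_sum]
  have hinner2 : ⟪∑ j ∈ Finset.Icc 1 m, u j, U⟫
      = ∑ j ∈ Finset.Icc 1 m, (fun k => ⟪u k, U⟫) j := by
    rw [sum_inner]
  rw [hinner2, key]
  ring
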